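/- Let q > 0 and define L(a) = ∫_1^∞ (v^{2q} − 1)^{−1/2} · sinh(a) · (1 + v² sinh(a)²)^{−1/2} dv for a > 0. Then L(a) tends to π/(2q) as a → ∞. -/

import Mathlib

open Real MeasureTheory Filter Set

section CatLAux

lemma sqrt_one_sub (q : ℝ) {v : ℝ} (hv : 1 < v) (hq : 0 < q) :
    Real.sqrt (1 - (v ^ (-q)) ^ 2) = v ^ (-q) * Real.sqrt (v ^ (2*q) - 1) := by
  have hv0 : (0:ℝ) < v := lt_trans one_pos hv
  have h2 : (0:ℝ) < v ^ (-q) := Real.rpow_pos_of_pos hv0 _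
  have key : 1 - (v ^ (-q)) ^ 2 = (v ^ (-q)) ^ 2 * (v ^ (2*q) - 1) := by
    have h3 : (v ^ (-q)) ^ 2 * v ^ (2*q) = 1 := by
      rw [← Real.rpow_natCast (v ^ (-q)) 2, ← Real.rpow_mul hv0.le, ← Real.rpow_add hv0]
      norm_num
      rw [show (-(q*2)+2*q : ℝ) = 0 by ring, Real.rpow_zero]
    nlinarith [h3]
  rw [key, Real.sqrt_mul (sq_nonneg _), Real.sqrt_sq h2.le]

lemma gderiv (q : ℝ) (hq : 0 < q) {v : ℝ} (hv : 1 < v) :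
    HasDerivAt (fun v : ℝ => Real.arccos (v ^ (-q)) / q)
      ((v ^ (2*q) - 1) ^ (-(1:ℝ)/2) * v⁻¹) v := by
  have hv0 : (0:ℝ) < v := lt_trans one_pos hv
  have hA : (0:ℝ) < v ^ (2*q) - 1 := by
    have : (1:ℝ) < v ^ (2*q) := Real.one_lt_rpow_iff_of_pos hv0 |>.2 (Or.inl ⟨hv, by positivity⟩)
    linarith
  have h2 : (0:ℝ) < v ^ (-q) := Real.rpow_pos_of_pos hv0 _
  have h1 : v ^ (-q) < 1 := by
    rw [Real.rpow_neg hv0.le]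
    rw [inv_lt_one_iff₀]
    right
    exact Real.one_lt_rpow_iff_of_pos hv0 |>.2 (Or.inl ⟨hv, hq⟩)
  have hd1 : HasDerivAt (fun v : ℝ => v ^ (-q)) (-q * v ^ (-q - 1)) v :=
    Real.hasDerivAt_rpow_const (Or.inl hv0.ne')
  have hd2 := (Real.hasDerivAt_arccos (by linarith) (ne_of_lt h1)).comp v hd1
  have hd3 := hd2.div_const q
  refine hd3.congr_deriv ?_
  symm
  rw [sqrt_one_sub q hv hq]
  have hsA : (0:ℝ) < Real.sqrt (v ^ (2*q) - 1) := Real.sqrt_pos.2 hA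
  have hpow : (v ^ (2*q) - 1) ^ (-(1:ℝ)/2) = (Real.sqrt (v ^ (2*q) - 1))⁻¹ := by
    rw [show (-(1:ℝ)/2) = -(1/2) by ring, Real.rpow_neg hA.le, Real.sqrt_eq_rpow]
  rw [hpow]
  have hvq : v ^ (-q - 1) = v ^ (-q) * v⁻¹ := by
    rw [← Real.rpow_neg_one v, ← Real.rpow_add hv0]
    ring_nf
  field_simp
  rw [hvq]
  field_simp

lemma gtend (q : ℝ) (hq : 0 < q) :
    Tendsto (fun v : ℝ => Real.arccos (v ^ (-q)) / q) atTop (nhds (π / (2*q))) := by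
  have h1 : Tendsto (fun v : ℝ => v ^ (-q)) atTop (nhds 0) := tendsto_rpow_neg_atTop hq
  have h2 : Tendsto (fun v : ℝ => Real.arccos (v ^ (-q))) atTop (nhds (Real.arccos 0)) :=
    (Real.continuous_arccos.continuousAt).tendsto.comp h1
  rw [Real.arccos_zero] at h2
  have := h2.div_const q
  convert this using 2
  ring

lemma gint (q : ℝ) (hq : 0 < q) :
    IntegrableOn (fun v : ℝ => (v ^ (2*q) - 1) ^ (-(1:ℝ)/2) * v⁻¹) (Ioi 1) ∧
    ∫ v in Ioi (1:ℝ), (v ^ (2*q) - 1) ^ (-(1:ℝ)/2) * v⁻¹ = π / (2*q) := by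
  have hcont : ContinuousWithinAt (fun v : ℝ => Real.arccos (v ^ (-q)) / q) (Ici 1) 1 := by
    apply ContinuousAt.continuousWithinAt
    exact (Real.continuous_arccos.continuousAt.comp
      (Real.continuousAt_rpow_const 1 (-q) (Or.inl one_ne_zero))).div_const q
  have hderiv : ∀ v ∈ Ioi (1:ℝ), HasDerivAt (fun v : ℝ => Real.arccos (v ^ (-q)) / q)
      ((v ^ (2*q) - 1) ^ (-(1:ℝ)/2) * v⁻¹) v := fun v hv => gderiv q hq hv
  have hpos : ∀ v ∈ Ioi (1:ℝ), 0 ≤ (v ^ (2*q) - 1) ^ (-(1:ℝ)/2) * v⁻¹ := by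
    intro v hv
    have hv0 : (0:ℝ) < v := lt_trans one_pos hv
    have h1 : (0:ℝ) ≤ v ^ (2*q) - 1 := by
      have : (1:ℝ) < v ^ (2*q) := Real.one_lt_rpow_iff_of_pos hv0 |>.2 (Or.inl ⟨hv, by positivity⟩)
      linarith
    positivity
  have hlim := gtend q hq
  constructor
  · exact integrableOn_Ioi_deriv_of_nonneg hcont hderiv hpos hlim
  · rw [integral_Ioi_of_hasDerivAt_of_nonneg hcont hderiv hpos hlim]
    simp [Real.one_rpow, Real.arccos_one]

lemma sq_rpow_neg_half {x : ℝ} (hx : 0 < x) : (x ^ 2 : ℝ) ^ (-(1:ℝ)/2) = x⁻¹ := by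
  rw [← Real.rpow_natCast x 2, ← Real.rpow_mul hx.le]
  norm_num
  exact Real.rpow_neg_one x

lemma kernel_bound {s v : ℝ} (hs : 0 < s) (hv : 1 ≤ v) :
    s * (1 + v ^ 2 * s ^ 2) ^ (-(1:ℝ)/2) ≤ v⁻¹ := by
  have hv0 : (0:ℝ) < v := lt_of_lt_of_le one_pos hv
  have h1 : ((v * s) ^ 2 : ℝ) ≤ 1 + v ^ 2 * s ^ 2 := by nlinarith
  have h2 : (0:ℝ) < (v * s) ^ 2 := by positivity
  have h3 : (1 + v ^ 2 * s ^ 2 : ℝ) ^ (-(1:ℝ)/2) ≤ ((v * s) ^ 2 : ℝ) ^ (-(1:ℝ)/2) :=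
    Real.rpow_le_rpow_of_nonpos h2 h1 (by norm_num)
  have h4 : ((v * s) ^ 2 : ℝ) ^ (-(1:ℝ)/2) = (v * s)⁻¹ := sq_rpow_neg_half (by positivity)
  calc s * (1 + v ^ 2 * s ^ 2) ^ (-(1:ℝ)/2) ≤ s * ((v * s) ^ 2 : ℝ) ^ (-(1:ℝ)/2) :=
        mul_le_mul_of_nonneg_left h3 hs.le
    _ = v⁻¹ := by rw [h4, mul_inv]; field_simp

lemma kernel_lim {v : ℝ} (hv : 1 < v) :
    Tendsto (fun a : ℝ => Real.sinh a * (1 + v ^ 2 * Real.sinh a ^ 2) ^ (-(1:ℝ)/2))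
      atTop (nhds v⁻¹) := by
  have hv0 : (0:ℝ) < v := lt_trans one_pos hv
  have hsinh : Tendsto Real.sinh atTop atTop := by
    apply tendsto_atTop_mono' atTop _ tendsto_id
    filter_upwards [eventually_ge_atTop (0:ℝ)] with x hx
    exact Real.self_le_sinh_iff.2 hx
  have hs : Tendsto (fun s : ℝ => s * (1 + v ^ 2 * s ^ 2) ^ (-(1:ℝ)/2)) atTop (nhds v⁻¹) := by
    have heq : ∀ᶠ s : ℝ in atTop, ((s⁻¹) ^ 2 + v ^ 2) ^ (-(1:ℝ)/2)
        = s * (1 + v ^ 2 * s ^ 2) ^ (-(1:ℝ)/2) := by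
      filter_upwards [eventually_gt_atTop (0:ℝ)] with s hs
      have key : (1 + v ^ 2 * s ^ 2 : ℝ) = s ^ 2 * ((s⁻¹) ^ 2 + v ^ 2) := by
        field_simp
      rw [key, Real.mul_rpow (by positivity) (by positivity), sq_rpow_neg_half hs]
      field_simp
    have h1 : Tendsto (fun s : ℝ => (s⁻¹) ^ 2 + v ^ 2) atTop (nhds (0 ^ 2 + v ^ 2)) :=
      ((tendsto_inv_atTop_zero.pow 2).add tendsto_const_nhds)
    have h2 : ContinuousAt (fun x : ℝ => x ^ (-(1:ℝ)/2)) ((0:ℝ) ^ 2 + v ^ 2) :=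
      Real.continuousAt_rpow_const _ _ (Or.inl (by positivity))
    have h3 := (h2.tendsto.comp h1).congr' heq
    have : ((0:ℝ) ^ 2 + v ^ 2) ^ (-(1:ℝ)/2) = v⁻¹ := by
      rw [show ((0:ℝ) ^ 2 + v ^ 2) = v ^ 2 by ring, sq_rpow_neg_half hv0]
    rwa [this] at h3
  exact hs.comp hsinh

end CatLAux


/-- The half-height of the r-catenoid with neck radius `a` in `ℍⁿ × ℝ`. -/
noncomputable def catL (q a : ℝ) : ℝ :=
  ∫ v in Set.Ioi (1 : ℝ),
    (v ^ (2 * q) - 1) ^ (-(1 : ℝ) / 2) * Real.sinh a *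
      (1 + v ^ 2 * Real.sinh a ^ 2) ^ (-(1 : ℝ) / 2)

/-- `L(a) → π/(2q)` as `a → ∞`. -/
theorem stmt_10 (q : ℝ) (hq : 0 < q) :
    Filter.Tendsto (fun a => catL q a) Filter.atTop (nhds (Real.pi / (2 * q))) := by
  obtain ⟨hint, hval⟩ := gint q hq
  have key : Tendsto (fun a => ∫ v in Ioi (1:ℝ),
      (v ^ (2 * q) - 1) ^ (-(1 : ℝ) / 2) * Real.sinh a *
      (1 + v ^ 2 * Real.sinh a ^ 2) ^ (-(1 : ℝ) / 2)) atTop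
      (nhds (∫ v in Ioi (1:ℝ), (v ^ (2*q) - 1) ^ (-(1:ℝ)/2) * v⁻¹)) := by
    apply tendsto_integral_filter_of_dominated_convergence
      (fun v : ℝ => (v ^ (2*q) - 1) ^ (-(1:ℝ)/2) * v⁻¹)
    · -- measurability
      filter_upwards with a
      apply ContinuousOn.aestronglyMeasurable _ measurableSet_Ioi
      have hc1 : ContinuousOn (fun v : ℝ => (v ^ (2*q) - 1) ^ (-(1:ℝ)/2)) (Ioi 1) := by
        apply ContinuousOn.rpow_const
        · exact (continuousOn_id.rpow_const fun v hv =>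
            Or.inl (ne_of_gt (lt_trans one_pos hv))).sub continuousOn_const
        · intro v hv
          left
          have hv0 : (0:ℝ) < v := lt_trans one_pos hv
          have : (1:ℝ) < v ^ (2*q) :=
            Real.one_lt_rpow_iff_of_pos hv0 |>.2 (Or.inl ⟨hv, by positivity⟩)
          intro h; rw [sub_eq_zero] at h; linarith [h.symm.le]
      have hc2 : ContinuousOn (fun v : ℝ => (1 + v ^ 2 * Real.sinh a ^ 2) ^ (-(1:ℝ)/2))
          (Ioi 1) := by
        apply ContinuousOn.rpow_const
        · exact (continuousOn_const.add ((continuousOn_id.pow 2).mul continuousOn_const))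
        · intro v hv
          left
          have : (0:ℝ) < 1 + v ^ 2 * Real.sinh a ^ 2 := by positivity
          exact ne_of_gt this
      exact (hc1.mul continuousOn_const).mul hc2
    · -- bound
      filter_upwards [eventually_gt_atTop (0:ℝ)] with a ha
      rw [ae_restrict_iff' measurableSet_Ioi]
      apply ae_of_all
      intro v hv
      have hv1 : (1:ℝ) < v := hv
      have hv0 : (0:ℝ) < v := lt_trans one_pos hv1
      have hs : 0 < Real.sinh a := Real.sinh_pos_iff.2 ha
      have hA : (0:ℝ) ≤ (v ^ (2*q) - 1) ^ (-(1:ℝ)/2) := Real.rpow_nonneg (by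
        have : (1:ℝ) < v ^ (2*q) :=
          Real.one_lt_rpow_iff_of_pos hv0 |>.2 (Or.inl ⟨hv1, by positivity⟩)
        linarith) _
      have hnn : (0:ℝ) ≤ (v ^ (2 * q) - 1) ^ (-(1 : ℝ) / 2) * Real.sinh a *
          (1 + v ^ 2 * Real.sinh a ^ 2) ^ (-(1 : ℝ) / 2) := by
        apply mul_nonneg (mul_nonneg hA hs.le) (Real.rpow_nonneg (by positivity) _)
      rw [Real.norm_eq_abs, abs_of_nonneg hnn, mul_assoc]
      exact mul_le_mul_of_nonneg_left (kernel_bound hs hv1.le) hA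
    · exact hint
    · -- pointwise limit
      rw [ae_restrict_iff' measurableSet_Ioi]
      apply ae_of_all
      intro v hv
      have hv1 : (1:ℝ) < v := hv
      have := (kernel_lim hv1).const_mul ((v ^ (2*q) - 1) ^ (-(1:ℝ)/2))
      simpa [mul_assoc] using this
  rw [hval] at key
  exact key
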